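/- For every formal power series g ∈ ℚ[[t]] with constant term 1, ℰ(ℒ(g)) = g. -/

import Mathlib

open PowerSeries
open Finset

/-- Substitution of `t^m` for `t` in a formal power series: `(substPow m f) = f(t^m)`.
(For `m ≥ 1`, the coefficient of `t^n` in `f(t^m)` is the coefficient of `t^{n/m}` in `f`
when `m ∣ n`, and `0` otherwise.) -/
noncomputable def substPow (m : ℕ) (f : PowerSeries ℚ) : PowerSeries ℚ :=
  PowerSeries.mk fun n => if m ∣ n then PowerSeries.coeff (n / m) f else 0

/-- The coefficientwise sum `∑_{m=1}^∞ g m` of a family of power series in which the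
`m`-th member has order `≥ m`: its `n`-th coefficient is `∑_{m=1}^{n}` of the `n`-th
coefficients (higher terms contribute nothing since `g m` has order `≥ m`). -/
noncomputable def seriesSum (g : ℕ → PowerSeries ℚ) : PowerSeries ℚ :=
  PowerSeries.mk fun n => ∑ m ∈ Finset.Icc 1 n, PowerSeries.coeff n (g m)

/-- Formal exponential `exp(h) = ∑_{k≥0} h^k / k!` of a power series `h` with zero
constant term (so that `h^k` has order `≥ k` and the sum converges coefficientwise). -/
noncomputable def expS (h : PowerSeries ℚ) : PowerSeries ℚ :=
  PowerSeries.mk fun n =>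
    ∑ k ∈ Finset.range (n + 1), (Nat.factorial k : ℚ)⁻¹ * PowerSeries.coeff n (h ^ k)

/-- Formal logarithm `log(1 + h) = ∑_{k≥1} (−1)^{k+1} h^k / k` for a power series `h`
with zero constant term. -/
noncomputable def logS (h : PowerSeries ℚ) : PowerSeries ℚ :=
  PowerSeries.mk fun n =>
    ∑ k ∈ Finset.Icc 1 n, ((-1 : ℚ) ^ (k + 1) / k) * PowerSeries.coeff n (h ^ k)

/-- The operator `ℰ(f) = exp(∑_{m=1}^∞ (1/m)·f(t^m))`. -/
noncomputable def calE (f : PowerSeries ℚ) : PowerSeries ℚ :=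
  expS (seriesSum fun m => (m : ℚ)⁻¹ • substPow m f)

/-- The operator `ℒ(g) = ∑_{n=1}^∞ (μ(n)/n)·log g(t^n)`. -/
noncomputable def calL (g : PowerSeries ℚ) : PowerSeries ℚ :=
  seriesSum fun n =>
    ((ArithmeticFunction.moebius n : ℚ) / n) • logS (substPow n g - 1)

lemma coeff_substPow (m n : ℕ) (f : PowerSeries ℚ) :
    coeff n (substPow m f) = if m ∣ n then coeff (n / m) f else 0 := by
  simp [substPow]

lemma coeff_pow_eq_zero {h : PowerSeries ℚ} (hh : constantCoeff h = 0) {n k : ℕ}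
    (hnk : n < k) : coeff n (h ^ k) = 0 := by
  have : (X : PowerSeries ℚ) ^ k ∣ h ^ k := pow_dvd_pow_of_dvd (X_dvd_iff.2 hh) k
  exact X_pow_dvd_iff.1 this n hnk

lemma coeff_mul_congr {a a' b : PowerSeries ℚ} {n : ℕ}
    (hx : ∀ i ≤ n, coeff i a = coeff i a') :
    coeff n (a * b) = coeff n (a' * b) := by
  rw [coeff_mul, coeff_mul]
  refine Finset.sum_congr rfl fun p hp => ?_
  rw [Finset.HasAntidiagonal.mem_antidiagonal] at hp
  rw [hx p.1 (by omega)]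

lemma substPow_map_one {m : ℕ} (hm : 1 ≤ m) : substPow m 1 = 1 := by
  ext n
  rw [coeff_substPow, PowerSeries.coeff_one, PowerSeries.coeff_one]
  rcases Nat.eq_zero_or_pos n with rfl | hn
  · simp
  · rw [if_neg (by omega : ¬ n = 0)]
    by_cases h : m ∣ n
    · rw [if_pos h, if_neg]
      exact Nat.div_ne_zero_iff.mpr ⟨by omega, Nat.le_of_dvd hn h⟩
    · rw [if_neg h]

lemma substPow_map_mul {m : ℕ} (hm : 1 ≤ m) (f g : PowerSeries ℚ) :
    substPow m (f * g) = substPow m f * substPow m g := by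
  ext n
  rw [coeff_substPow]
  conv_rhs => rw [PowerSeries.coeff_mul]
  simp only [coeff_substPow]
  by_cases h : m ∣ n
  · rw [if_pos h, PowerSeries.coeff_mul]
    rw [← Finset.sum_filter_of_ne
      (p := fun p : ℕ × ℕ => m ∣ p.1 ∧ m ∣ p.2)
      (f := fun p : ℕ × ℕ => (if m ∣ p.1 then coeff (p.1/m) f else 0) *
        (if m ∣ p.2 then coeff (p.2/m) g else 0))
      (s := Finset.HasAntidiagonal.antidiagonal n)
      (by
        intro p _ hne
        by_contra hc
        apply hne
        by_cases h1 : m ∣ p.1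
        · have : ¬ m ∣ p.2 := fun h2 => hc ⟨h1, h2⟩
          simp [this]
        · simp [h1])]
    refine (Finset.sum_nbij' (i := fun p => (p.1 / m, p.2 / m))
      (j := fun q => (q.1 * m, q.2 * m))
      ?_ ?_ ?_ ?_ ?_).symm
    · intro q hq
      simp only [Finset.mem_filter, Finset.HasAntidiagonal.mem_antidiagonal] at hq
      obtain ⟨hsum, hd1, hd2⟩ := hq
      simp only [Finset.HasAntidiagonal.mem_antidiagonal]
      obtain ⟨a, ha⟩ := hd1
      obtain ⟨b, hb⟩ := hd2
      have hn : n = m * (a + b) := by rw [← hsum, ha, hb]; ring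
      rw [ha, hb, hn, Nat.mul_div_cancel_left _ (by omega : 0 < m),
        Nat.mul_div_cancel_left _ (by omega : 0 < m),
        Nat.mul_div_cancel_left _ (by omega : 0 < m)]
    · intro p hp
      simp only [Finset.HasAntidiagonal.mem_antidiagonal] at hp
      simp only [Finset.mem_filter, Finset.HasAntidiagonal.mem_antidiagonal]
      refine ⟨?_, dvd_mul_left m p.1, dvd_mul_left m p.2⟩
      calc p.1 * m + p.2 * m = (p.1 + p.2) * m := by ring
        _ = n := by rw [hp, Nat.div_mul_cancel h]
    · intro q hq
      simp only [Finset.mem_filter, Finset.HasAntidiagonal.mem_antidiagonal] at hq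
      simp [Nat.div_mul_cancel hq.2.1, Nat.div_mul_cancel hq.2.2]
    · intro p hp
      simp [Nat.mul_div_cancel _ (by omega : 0 < m)]
    · intro q hq
      simp only [Finset.mem_filter, Finset.HasAntidiagonal.mem_antidiagonal] at hq
      simp [hq.2.1, hq.2.2]
  · rw [if_neg h]
    refine (Finset.sum_eq_zero fun p hp => ?_).symm
    rw [Finset.HasAntidiagonal.mem_antidiagonal] at hp
    by_cases h1 : m ∣ p.1
    · have : ¬ m ∣ p.2 := fun hc => h (hp ▸ Nat.dvd_add h1 hc)
      simp [this]
    · simp [h1]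

lemma substPow_map_pow {m : ℕ} (hm : 1 ≤ m) (f : PowerSeries ℚ) (k : ℕ) :
    substPow m (f ^ k) = substPow m f ^ k := by
  induction k with
  | zero => simpa using substPow_map_one hm
  | succ k ih => rw [pow_succ, pow_succ, substPow_map_mul hm, ih]

lemma substPow_map_sub (m : ℕ) (f g : PowerSeries ℚ) :
    substPow m (f - g) = substPow m f - substPow m g := by
  ext n
  simp only [coeff_substPow, map_sub]
  split <;> simp

lemma coeff_seriesSum (g : ℕ → PowerSeries ℚ) (n : ℕ) :
    coeff n (seriesSum g) = ∑ m ∈ Icc 1 n, coeff n (g m) := by simp [seriesSum]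

lemma coeff_expS (h : PowerSeries ℚ) (n : ℕ) :
    coeff n (expS h) = ∑ k ∈ range (n + 1), (Nat.factorial k : ℚ)⁻¹ * coeff n (h ^ k) := by
  simp [expS]

lemma coeff_logS (h : PowerSeries ℚ) (n : ℕ) :
    coeff n (logS h) = ∑ k ∈ Icc 1 n, ((-1 : ℚ) ^ (k + 1) / k) * coeff n (h ^ k) := by
  simp [logS]

lemma coeff_expS_trunc {h : PowerSeries ℚ} (hh : constantCoeff h = 0) {n N : ℕ}
    (hn : n ≤ N) :
    coeff n (expS h) =
      coeff n (∑ k ∈ range (N + 1), (Nat.factorial k : ℚ)⁻¹ • h ^ k) := by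
  rw [map_sum, coeff_expS]
  simp only [LinearMap.map_smul, smul_eq_mul]
  refine Finset.sum_subset (by intro k hk; simp at hk ⊢; omega) ?_
  intro k hk1 hk2
  simp only [Finset.mem_range] at hk1 hk2
  rw [coeff_pow_eq_zero hh (by omega), mul_zero]

lemma coeff_logS_trunc {h : PowerSeries ℚ} (hh : constantCoeff h = 0) {n N : ℕ}
    (hn : n ≤ N) :
    coeff n (logS h) =
      coeff n (∑ k ∈ Icc 1 N, ((-1 : ℚ) ^ (k + 1) / k) • h ^ k) := by
  rw [map_sum, coeff_logS]
  simp only [LinearMap.map_smul, smul_eq_mul]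
  refine Finset.sum_subset (by intro k hk; simp at hk ⊢; omega) ?_
  intro k hk1 hk2
  simp only [Finset.mem_Icc] at hk1 hk2
  rw [coeff_pow_eq_zero hh (by omega), mul_zero]

lemma constantCoeff_logS (h : PowerSeries ℚ) : constantCoeff (logS h) = 0 := by
  rw [← coeff_zero_eq_constantCoeff_apply, coeff_logS]
  simp

lemma constantCoeff_expS {h : PowerSeries ℚ} (hh : constantCoeff h = 0) :
    constantCoeff (expS h) = 1 := by
  rw [← coeff_zero_eq_constantCoeff_apply, coeff_expS]
  simp

lemma substPow_logS {j : ℕ} (hj : 1 ≤ j) {h : PowerSeries ℚ} (hh : constantCoeff h = 0) :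
    logS (substPow j h) = substPow j (logS h) := by
  ext n
  rw [coeff_logS, coeff_substPow]
  have step : ∀ k, coeff n (substPow j h ^ k) =
      if j ∣ n then coeff (n / j) (h ^ k) else 0 := by
    intro k
    rw [← substPow_map_pow hj, coeff_substPow]
  simp only [step]
  by_cases hd : j ∣ n
  · simp only [if_pos hd, coeff_logS]
    refine (Finset.sum_subset (fun k hk => by
      simp only [Finset.mem_Icc] at hk ⊢
      exact ⟨hk.1, le_trans hk.2 (Nat.div_le_self n j)⟩) ?_).symm
    intro k hk1 hk2
    simp only [Finset.mem_Icc] at hk1 hk2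
    rw [coeff_pow_eq_zero hh (by omega), mul_zero]
  · rw [if_neg hd]
    exact Finset.sum_eq_zero fun k _ => by rw [if_neg hd, mul_zero]

lemma deriv_exp_trunc (h : PowerSeries ℚ) (N : ℕ) :
    d⁄dX ℚ (∑ k ∈ range (N + 1 + 1), (Nat.factorial k : ℚ)⁻¹ • h ^ k) =
      (∑ k ∈ range (N + 1), (Nat.factorial k : ℚ)⁻¹ • h ^ k) * d⁄dX ℚ h := by
  rw [map_sum, Finset.sum_range_succ', Finset.sum_mul]
  have h0 : d⁄dX ℚ ((Nat.factorial 0 : ℚ)⁻¹ • h ^ 0) = 0 := by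
    simp [Derivation.map_smul]
  rw [h0, add_zero]
  refine Finset.sum_congr rfl fun k _ => ?_
  rw [Derivation.map_smul, Derivation.leibniz_pow, Nat.add_sub_cancel, smul_mul_assoc,
    smul_eq_mul, ← Nat.cast_smul_eq_nsmul ℚ, smul_smul]
  congr 1
  have h1 : ((k : ℚ) + 1) ≠ 0 := by positivity
  have h2 : (Nat.factorial k : ℚ) ≠ 0 := Nat.cast_ne_zero.mpr k.factorial_ne_zero
  rw [Nat.factorial_succ]
  push_cast
  field_simp

lemma deriv_log_trunc (h : PowerSeries ℚ) (N : ℕ) :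
    d⁄dX ℚ (∑ k ∈ Icc 1 (N + 1), ((-1 : ℚ) ^ (k + 1) / k) • h ^ k) =
      (∑ j ∈ range (N + 1), (-h) ^ j) * d⁄dX ℚ h := by
  rw [map_sum, show Icc 1 (N+1) = Ico 1 (N+2) by rw [← Finset.Ico_add_one_right_eq_Icc]; rfl,
    Finset.sum_Ico_eq_sum_range, Finset.sum_mul]
  refine Finset.sum_congr rfl fun j _ => ?_
  rw [Derivation.map_smul, Derivation.leibniz_pow]
  simp only [Nat.add_sub_cancel_left]
  rw [smul_eq_mul, ← Nat.cast_smul_eq_nsmul ℚ, smul_smul]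
  have h1 : ((j : ℚ) + 1) ≠ 0 := by positivity
  have hsc : (-1 : ℚ) ^ (1 + j + 1) / (1 + j : ℕ) * ((1 + j : ℕ) : ℚ) = (-1 : ℚ) ^ j := by
    push_cast
    field_simp
    ring
  rw [hsc, ← smul_mul_assoc, ← smul_pow, neg_smul, one_smul]

lemma deriv_expS {h : PowerSeries ℚ} (hh : constantCoeff h = 0) :
    d⁄dX ℚ (expS h) = expS h * d⁄dX ℚ h := by
  ext n
  rw [coeff_derivative, coeff_expS_trunc hh (Nat.le_refl (n+1)), ← coeff_derivative,
    deriv_exp_trunc]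
  exact coeff_mul_congr fun i hi => (coeff_expS_trunc hh hi).symm

lemma deriv_logS {h : PowerSeries ℚ} (hh : constantCoeff h = 0) :
    (1 + h) * d⁄dX ℚ (logS h) = d⁄dX ℚ h := by
  ext n
  have hstep : ∀ i ≤ n, coeff i (d⁄dX ℚ (logS h)) =
      coeff i ((∑ j ∈ range (n + 1), (-h) ^ j) * d⁄dX ℚ h) := by
    intro i hi
    rw [coeff_derivative, coeff_logS_trunc hh (by omega : i + 1 ≤ n + 1),
      ← coeff_derivative, deriv_log_trunc]
  rw [mul_comm, coeff_mul_congr hstep, mul_comm, ← mul_assoc]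
  have hgeom : (1 + h) * (∑ j ∈ range (n + 1), (-h) ^ j) = 1 - (-h) ^ (n + 1) := by
    have := geom_sum_mul (-h) (n + 1)
    have h2 : (1 + h) * (∑ j ∈ range (n + 1), (-h) ^ j)
        = -((∑ j ∈ range (n + 1), (-h) ^ j) * (-h - 1)) := by ring
    rw [h2, this]
    ring
  rw [hgeom, sub_mul, one_mul, map_sub]
  have : coeff n ((-h) ^ (n + 1) * d⁄dX ℚ h) = 0 := by
    rw [PowerSeries.coeff_mul]
    refine Finset.sum_eq_zero fun p hp => ?_
    rw [Finset.HasAntidiagonal.mem_antidiagonal] at hp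
    rw [coeff_pow_eq_zero (by simp [hh]) (by omega : p.1 < n + 1), zero_mul]
  rw [this, sub_zero]

lemma expS_logS {h : PowerSeries ℚ} (hh : constantCoeff h = 0) :
    expS (logS h) = 1 + h := by
  have hc1 : constantCoeff (1 + h) = 1 := by simp [hh]
  have hne : constantCoeff (1 + h) ≠ 0 := by rw [hc1]; exact one_ne_zero
  have hu : constantCoeff (logS h) = 0 := constantCoeff_logS h
  set F := expS (logS h) with hF
  have key : F * (1 + h)⁻¹ = 1 := by
    refine derivative.ext ?_ ?_
    · rw [Derivation.map_one_eq_zero, Derivation.leibniz, smul_eq_mul, smul_eq_mul,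
        derivative_inv', hF, deriv_expS hu]
      have hdd : (1 + h) * d⁄dX ℚ (logS h) = d⁄dX ℚ (1 + h) := by
        rw [deriv_logS hh]; simp
      have expand : expS (logS h) * (-(1 + h)⁻¹ ^ 2 * d⁄dX ℚ (1 + h)) +
          (1 + h)⁻¹ * (expS (logS h) * d⁄dX ℚ (logS h)) =
          expS (logS h) * (1 + h)⁻¹ ^ 2 *
            ((1 + h) * d⁄dX ℚ (logS h) - d⁄dX ℚ (1 + h)) := by
        have hinv : (1 + h)⁻¹ * (1 + h) = 1 := PowerSeries.inv_mul_cancel _ hne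
        have : (1 + h)⁻¹ = (1 + h)⁻¹ ^ 2 * (1 + h) := by
          rw [pow_two, mul_assoc, hinv, mul_one]
        nth_rewrite 2 [this]
        ring
      rw [expand, hdd, sub_self, mul_zero]
    · rw [map_mul, PowerSeries.constantCoeff_inv, hc1, hF, constantCoeff_expS hu]
      simp
  calc F = F * ((1 + h)⁻¹ * (1 + h)) := by
        rw [PowerSeries.inv_mul_cancel _ hne, mul_one]
    _ = F * (1 + h)⁻¹ * (1 + h) := by ring
    _ = 1 + h := by rw [key, one_mul]

lemma sum_moebius_div (d : ℕ) (hd : d ≠ 0) :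
    ∑ j ∈ d.divisors, ((ArithmeticFunction.moebius j : ℤ) : ℚ) =
      if d = 1 then 1 else 0 := by
  have h1 := congrArg (fun f => f d) (ArithmeticFunction.coe_zeta_mul_coe_moebius (R := ℚ))
  simp only [ArithmeticFunction.coe_zeta_mul_apply, ArithmeticFunction.one_apply] at h1
  rw [← h1]
  refine Finset.sum_congr rfl fun j _ => ?_
  simp [ArithmeticFunction.intCoe_apply]

lemma divisors_double_sum (n : ℕ) (f : ℕ → ℕ → ℚ) :
    ∑ m ∈ n.divisors, ∑ j ∈ (n / m).divisors, f m j =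
      ∑ d ∈ n.divisors, ∑ j ∈ d.divisors, f (d / j) j := by
  rw [Finset.sum_sigma', Finset.sum_sigma']
  refine Finset.sum_nbij' (i := fun p => ⟨p.1 * p.2, p.2⟩)
    (j := fun q => ⟨q.1 / q.2, q.2⟩) ?_ ?_ ?_ ?_ ?_
  · rintro ⟨m, j⟩ hp
    simp only [Finset.mem_sigma, Nat.mem_divisors] at hp ⊢
    obtain ⟨⟨hm, hn0⟩, hj, hnm0⟩ := hp
    have hmj : m * j ∣ n := by
      have h2 : n = m * (n / m) := (Nat.mul_div_cancel' hm).symm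
      calc m * j ∣ m * (n / m) := mul_dvd_mul_left m hj
        _ = n := h2.symm
    have hj0 : j ≠ 0 := by rintro rfl; exact hnm0 (zero_dvd_iff.mp hj)
    have hm0 : m ≠ 0 := by rintro rfl; exact hn0 (zero_dvd_iff.mp hm)
    exact ⟨⟨hmj, hn0⟩, dvd_mul_left j m, Nat.mul_ne_zero hm0 hj0⟩
  · rintro ⟨d, j⟩ hq
    simp only [Finset.mem_sigma, Nat.mem_divisors] at hq ⊢
    obtain ⟨⟨hd, hn0⟩, hj, hd0⟩ := hq
    have hj0 : j ≠ 0 := by rintro rfl; exact hd0 (zero_dvd_iff.mp hj)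
    have hdj : d / j ∣ n := dvd_trans (Nat.div_dvd_of_dvd hj) hd
    have hdj0 : d / j ≠ 0 := by
      intro hzero
      apply hd0
      rw [← Nat.div_mul_cancel hj, hzero, zero_mul]
    refine ⟨⟨hdj, hn0⟩, ?_, ?_⟩
    · rw [Nat.dvd_div_iff_mul_dvd hdj, Nat.div_mul_cancel hj]
      exact hd
    · exact Nat.div_ne_zero_iff.mpr ⟨hdj0, Nat.le_of_dvd (Nat.pos_of_ne_zero hn0) hdj⟩
  · rintro ⟨m, j⟩ hp
    simp only [Finset.mem_sigma, Nat.mem_divisors] at hp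
    have hj0 : 0 < j := Nat.pos_of_mem_divisors (Nat.mem_divisors.mpr hp.2)
    simp [Nat.mul_div_cancel _ hj0]
  · rintro ⟨d, j⟩ hq
    simp only [Finset.mem_sigma, Nat.mem_divisors] at hq
    simp [Nat.div_mul_cancel hq.2.1]
  · rintro ⟨m, j⟩ hp
    simp only [Finset.mem_sigma, Nat.mem_divisors] at hp
    have hj0 : 0 < j := Nat.pos_of_mem_divisors (Nat.mem_divisors.mpr hp.2)
    simp [Nat.mul_div_cancel _ hj0]

lemma sum_Icc_dvd (n : ℕ) (f : ℕ → ℚ) :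
    (∑ m ∈ Icc 1 n, if m ∣ n then f m else 0) = ∑ m ∈ n.divisors, f m := by
  rw [Nat.divisors, ← Finset.Ico_add_one_right_eq_Icc, Finset.sum_filter]

lemma coeff_calL (g : PowerSeries ℚ) (hg : constantCoeff g = 1) (N : ℕ) (hN : N ≠ 0) :
    coeff N (calL g) =
      ∑ j ∈ N.divisors, ((ArithmeticFunction.moebius j : ℚ) / j) *
        coeff (N / j) (logS (g - 1)) := by
  have hh : constantCoeff (g - 1) = 0 := by simp [hg]
  rw [calL, coeff_seriesSum]
  rw [← sum_Icc_dvd]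
  refine Finset.sum_congr rfl fun j hj => ?_
  simp only [Finset.mem_Icc] at hj
  have h1j : 1 ≤ j := hj.1
  have key : substPow j g - 1 = substPow j (g - 1) := by
    rw [substPow_map_sub, substPow_map_one h1j]
  rw [key, LinearMap.map_smul, smul_eq_mul, substPow_logS h1j hh, coeff_substPow]
  by_cases hd : j ∣ N
  · rw [if_pos hd, if_pos hd]
  · rw [if_neg hd, if_neg hd, mul_zero]

lemma seriesSum_calL (g : PowerSeries ℚ) (hg : constantCoeff g = 1) :
    seriesSum (fun m => (m : ℚ)⁻¹ • substPow m (calL g)) = logS (g - 1) := by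
  have hh : constantCoeff (g - 1) = 0 := by simp [hg]
  ext n
  rw [coeff_seriesSum]
  rcases Nat.eq_zero_or_pos n with rfl | hn
  · rw [show (Icc 1 0 : Finset ℕ) = ∅ from rfl, Finset.sum_empty,
      coeff_zero_eq_constantCoeff, constantCoeff_logS]
  · have hn0 : n ≠ 0 := by omega
    have step1 : (∑ m ∈ Icc 1 n, coeff n ((m : ℚ)⁻¹ • substPow m (calL g))) =
        ∑ m ∈ Icc 1 n, if m ∣ n then (m : ℚ)⁻¹ * coeff (n / m) (calL g) else 0 := by
      refine Finset.sum_congr rfl fun m _ => ?_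
      rw [LinearMap.map_smul, smul_eq_mul, coeff_substPow]
      by_cases hd : m ∣ n
      · rw [if_pos hd, if_pos hd]
      · rw [if_neg hd, if_neg hd, mul_zero]
    rw [step1, sum_Icc_dvd]
    have step2 : (∑ m ∈ n.divisors, (m : ℚ)⁻¹ * coeff (n / m) (calL g)) =
        ∑ m ∈ n.divisors, ∑ j ∈ (n / m).divisors,
          (m : ℚ)⁻¹ * (((ArithmeticFunction.moebius j : ℚ) / j) *
            coeff (n / (m * j)) (logS (g - 1))) := by
      refine Finset.sum_congr rfl fun m hm => ?_
      rw [Nat.mem_divisors] at hm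
      have hnm : n / m ≠ 0 := by
        refine Nat.div_ne_zero_iff.mpr ⟨?_, Nat.le_of_dvd (by omega) hm.1⟩
        rintro rfl; exact hn0 (zero_dvd_iff.mp hm.1)
      rw [coeff_calL g hg _ hnm, Finset.mul_sum]
      refine Finset.sum_congr rfl fun j hj => ?_
      rw [Nat.div_div_eq_div_mul]
    rw [step2, divisors_double_sum n
      (fun m j => (m : ℚ)⁻¹ * (((ArithmeticFunction.moebius j : ℚ) / j) *
        coeff (n / (m * j)) (logS (g - 1))))]
    have step3 : ∀ d ∈ n.divisors,
        (∑ j ∈ d.divisors, ((d / j : ℕ) : ℚ)⁻¹ *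
          (((ArithmeticFunction.moebius j : ℚ) / j) *
            coeff (n / (d / j * j)) (logS (g - 1)))) =
        (if d = 1 then 1 else 0) * (d : ℚ)⁻¹ * coeff (n / d) (logS (g - 1)) := by
      intro d hd
      rw [Nat.mem_divisors] at hd
      have hd0 : d ≠ 0 := by rintro rfl; exact hn0 (zero_dvd_iff.mp hd.1)
      rw [← sum_moebius_div d hd0, Finset.sum_mul, Finset.sum_mul]
      refine Finset.sum_congr rfl fun j hj => ?_
      rw [Nat.mem_divisors] at hj
      have hj0 : j ≠ 0 := by rintro rfl; exact hd0 (zero_dvd_iff.mp hj.1)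
      have hdj : d / j * j = d := Nat.div_mul_cancel hj.1
      rw [hdj]
      have hcast : ((d / j : ℕ) : ℚ) * (j : ℚ) = (d : ℚ) := by
        rw [← Nat.cast_mul, hdj]
      have hdjQ : ((d / j : ℕ) : ℚ) ≠ 0 := by
        intro hz
        rw [hz, zero_mul] at hcast
        exact (Nat.cast_ne_zero.mpr hd0) hcast.symm
      have hjQ : (j : ℚ) ≠ 0 := Nat.cast_ne_zero.mpr hj0
      have hdQ : ((d : ℕ) : ℚ) ≠ 0 := Nat.cast_ne_zero.mpr hd0
      set c := coeff (n / d) (logS (g - 1)) with hc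
      set q := ((ArithmeticFunction.moebius j : ℤ) : ℚ) with hq
      have hinv : ((d / j : ℕ) : ℚ)⁻¹ * ((j : ℚ))⁻¹ = ((d : ℕ) : ℚ)⁻¹ := by
        rw [← mul_inv, hcast]
      rw [div_eq_mul_inv]
      rw [show ((d / j : ℕ) : ℚ)⁻¹ * (q * ((j : ℚ))⁻¹ * c) =
        q * (((d / j : ℕ) : ℚ)⁻¹ * ((j : ℚ))⁻¹) * c from by ring, hinv]
    rw [Finset.sum_congr rfl step3]
    rw [Finset.sum_eq_single_of_mem 1 (Nat.one_mem_divisors.mpr hn0)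
      (fun d _ hd1 => by rw [if_neg hd1, zero_mul, zero_mul])]
    simp

/-- For every formal power series `g ∈ ℚ[[t]]` with constant term `1`, `ℰ(ℒ(g)) = g`. -/
theorem calE_calL (g : PowerSeries ℚ) (hg : PowerSeries.constantCoeff g = 1) :
    calE (calL g) = g := by
  have hh : constantCoeff (g - 1) = 0 := by simp [hg]
  rw [calE, seriesSum_calL g hg, expS_logS hh]
  ring
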